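/- Let (α_1, …, α_m) and (β_1, …, β_n) be complementary sequences of integers all ≥ 2. Then there exist vectors u_1, …, u_m, v_1, …, v_n in ℤ^{m+n} such that, with ⟨x, y⟩ = −∑ x_i y_i: ⟨u_i, u_i⟩ = −α_i for all i and ⟨v_j, v_j⟩ = −β_j for all j; ⟨u_i, u_{i+1}⟩ = 1 for 1 ≤ i ≤ m−1 and ⟨v_j, v_{j+1}⟩ = 1 for 1 ≤ j ≤ n−1; ⟨u_i, u_j⟩ = 0 whenever |i−j| ≥ 2 and ⟨v_i, v_j⟩ = 0 whenever |i−j| ≥ 2; and ⟨u_i, v_j⟩ = 0 for all i, j. (In other words, every pair of complementary legs has a lattice embedding.) -/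

import Mathlib

def ncf : List ℚ → ℚ
  | [] => 0
  | [a] => a
  | a :: b :: l => a - 1 / ncf (b :: l)

def ncfZ (l : List ℤ) : ℚ := ncf (l.map (fun x => (x : ℚ)))

/-- Two sequences of integers, all ≥ 2, are complementary if the reciprocals of their
negative continued fractions sum to 1. -/
def Complementary (a b : List ℤ) : Prop :=
  a ≠ [] ∧ b ≠ [] ∧ (∀ x ∈ a, 2 ≤ x) ∧ (∀ x ∈ b, 2 ≤ x) ∧
    1 / ncfZ a + 1 / ncfZ b = 1

lemma ncfZ_singleton (a : ℤ) : ncfZ [a] = a := by simp [ncfZ, ncf]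

lemma ncfZ_cons_cons (a c : ℤ) (l : List ℤ) :
    ncfZ (a :: c :: l) = a - 1 / ncfZ (c :: l) := by
  unfold ncfZ
  rfl

lemma ncfZ_bounds : ∀ (l : List ℤ) (a : ℤ), 2 ≤ a → (∀ x ∈ l, 2 ≤ x) →
    1 < ncfZ (a :: l) ∧ (a : ℚ) - 1 < ncfZ (a :: l) ∧ ncfZ (a :: l) ≤ (a : ℚ) := by
  intro l
  induction l with
  | nil =>
    intro a ha _
    have h2 : (2 : ℚ) ≤ (a : ℚ) := by exact_mod_cast ha
    rw [ncfZ_singleton]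
    refine ⟨by linarith, by linarith, le_refl _⟩
  | cons c l ih =>
    intro a ha h
    have hc := ih c (h c (by simp)) (fun x hx => h x (by simp [hx]))
    have h2 : (2 : ℚ) ≤ (a : ℚ) := by exact_mod_cast ha
    rw [ncfZ_cons_cons]
    have h1 : 1 < ncfZ (c :: l) := hc.1
    have hpos : 0 < 1 / ncfZ (c :: l) := by positivity
    have hlt : 1 / ncfZ (c :: l) < 1 := by
      rw [div_lt_one (by linarith)]; linarith
    refine ⟨by linarith, by linarith, by linarith⟩

lemma ncfZ_lt_head (a c : ℤ) (l : List ℤ) (h2 : 2 ≤ c) (hl : ∀ x ∈ l, 2 ≤ x) :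
    ncfZ (a :: c :: l) < (a : ℚ) := by
  have hc := ncfZ_bounds l c h2 hl
  rw [ncfZ_cons_cons]
  have h1 : 1 < ncfZ (c :: l) := hc.1
  have : 0 < 1 / ncfZ (c :: l) := by positivity
  linarith

lemma ncfZ_pred_head (a : ℤ) (l : List ℤ) :
    ncfZ ((a - 1) :: l) = ncfZ (a :: l) - 1 := by
  cases l with
  | nil => rw [ncfZ_singleton, ncfZ_singleton]; push_cast; ring
  | cons c l => rw [ncfZ_cons_cons, ncfZ_cons_cons]; push_cast; ring

/-! ### Bilinear pairing infrastructure -/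

def Spair (N : ℕ) (x y : ℕ → ℤ) : ℤ := ∑ k ∈ Finset.range N, x k * y k

lemma Spair_comm (N : ℕ) (x y : ℕ → ℤ) : Spair N x y = Spair N y x := by
  unfold Spair; exact Finset.sum_congr rfl fun k _ => mul_comm _ _

lemma Spair_succ (N : ℕ) (x y : ℕ → ℤ) :
    Spair (N + 1) x y = Spair N x y + x N * y N := Finset.sum_range_succ _ _

lemma Spair_lift (N : ℕ) (x y : ℕ → ℤ) (hx : x N = 0) :
    Spair (N + 1) x y = Spair N x y := by
  rw [Spair_succ, hx, zero_mul, add_zero]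

def dl (c : ℕ) (t : ℤ) : ℕ → ℤ := fun k => if k = c then t else 0

def addf (x y : ℕ → ℤ) : ℕ → ℤ := fun k => x k + y k

def subf (x y : ℕ → ℤ) : ℕ → ℤ := fun k => x k - y k

lemma dl_self (c : ℕ) (t : ℤ) : dl c t c = t := by simp [dl]

lemma dl_ne (c k : ℕ) (t : ℤ) (h : k ≠ c) : dl c t k = 0 := by simp [dl, h]

lemma Spair_dl_right (N c : ℕ) (t : ℤ) (x : ℕ → ℤ) (h : c < N) :
    Spair N x (dl c t) = x c * t := by
  unfold Spair dl
  rw [Finset.sum_eq_single c]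
  · simp
  · intro k _ hk; simp [hk]
  · intro hc; exact absurd (Finset.mem_range.2 h) hc

lemma Spair_dl_left (N c : ℕ) (t : ℤ) (x : ℕ → ℤ) (h : c < N) :
    Spair N (dl c t) x = t * x c := by
  rw [Spair_comm, Spair_dl_right _ _ _ _ h, mul_comm]

lemma Spair_addf_right (N : ℕ) (x y z : ℕ → ℤ) :
    Spair N x (addf y z) = Spair N x y + Spair N x z := by
  unfold Spair addf
  rw [← Finset.sum_add_distrib]
  exact Finset.sum_congr rfl fun k _ => by ring

lemma Spair_subf_right (N : ℕ) (x y z : ℕ → ℤ) :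
    Spair N x (subf y z) = Spair N x y - Spair N x z := by
  unfold Spair subf
  rw [← Finset.sum_sub_distrib]
  exact Finset.sum_congr rfl fun k _ => by ring

lemma Spair_addf_left (N : ℕ) (x y z : ℕ → ℤ) :
    Spair N (addf y z) x = Spair N y x + Spair N z x := by
  rw [Spair_comm, Spair_addf_right, Spair_comm _ x y, Spair_comm _ x z]

lemma Spair_subf_left (N : ℕ) (x y z : ℕ → ℤ) :
    Spair N (subf y z) x = Spair N y x - Spair N z x := by
  rw [Spair_comm, Spair_subf_right, Spair_comm _ x y, Spair_comm _ x z]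

def Good (N : ℕ) (a b : List ℤ) (u v : ℕ → ℕ → ℤ) : Prop :=
  (∀ i k, N ≤ k → u i k = 0) ∧
  (∀ j k, N ≤ k → v j k = 0) ∧
  (∀ i (h : i < a.length), Spair N (u i) (u i) = a.get ⟨i, h⟩) ∧
  (∀ j (h : j < b.length), Spair N (v j) (v j) = b.get ⟨j, h⟩) ∧
  (∀ i, i + 1 < a.length → Spair N (u i) (u (i + 1)) = -1) ∧
  (∀ j, j + 1 < b.length → Spair N (v j) (v (j + 1)) = -1) ∧
  (∀ i j, i + 2 ≤ j → j < a.length → Spair N (u i) (u j) = 0) ∧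
  (∀ i j, i + 2 ≤ j → j < b.length → Spair N (v i) (v j) = 0) ∧
  (∀ i j, i < a.length → j < b.length → Spair N (u i) (v j) = 0)

def ChainInv (N : ℕ) (u v : ℕ → ℕ → ℤ) : Prop :=
  ∃ k, k < N ∧ ∃ s : ℤ, s * s = 1 ∧ u 0 k = -s ∧ v 0 k = s ∧
    (∀ i, 1 ≤ i → u i k = 0) ∧ (∀ j, 1 ≤ j → v j k = 0)

lemma Good.symm {N : ℕ} {a b : List ℤ} {u v : ℕ → ℕ → ℤ} (h : Good N a b u v) :
    Good N b a v u := by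
  obtain ⟨h1, h2, h3, h4, h5, h6, h7, h8, h9⟩ := h
  exact ⟨h2, h1, h4, h3, h6, h5, h8, h7,
    fun i j hi hj => by rw [Spair_comm]; exact h9 j i hj hi⟩

lemma ChainInv.symm {N : ℕ} {u v : ℕ → ℕ → ℤ} (h : ChainInv N u v) : ChainInv N v u := by
  obtain ⟨k, hk, s, hs, hu, hv, hui, hvj⟩ := h
  exact ⟨k, hk, -s, by rw [neg_mul_neg]; exact hs, by rw [hv, neg_neg],
    by rw [hu], hvj, hui⟩

lemma base_case : ∃ u v : ℕ → ℕ → ℤ, Good 2 [2] [2] u v ∧ ChainInv 2 u v := by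
  refine ⟨fun i => match i with | 0 => addf (dl 0 1) (dl 1 (-1)) | _ + 1 => 0,
          fun j => match j with | 0 => addf (dl 0 1) (dl 1 1) | _ + 1 => 0,
          ⟨?_, ?_, ?_, ?_, ?_, ?_, ?_, ?_, ?_⟩, ?_⟩
  · intro i k hk
    rcases i with _ | i
    · show addf (dl 0 1) (dl 1 (-1)) k = 0
      rw [addf, dl_ne 0 k 1 (by omega), dl_ne 1 k (-1) (by omega)]; ring
    · rfl
  · intro j k hk
    rcases j with _ | j
    · show addf (dl 0 1) (dl 1 1) k = 0
      rw [addf, dl_ne 0 k 1 (by omega), dl_ne 1 k 1 (by omega)]; ring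
    · rfl
  · intro i h
    simp only [List.length_singleton] at h
    rcases i with _ | i
    · show Spair 2 (addf (dl 0 1) (dl 1 (-1))) (addf (dl 0 1) (dl 1 (-1))) = _
      rw [Spair_addf_right, Spair_dl_right 2 0 1 _ (by omega), Spair_dl_right 2 1 _ _ (by omega)]
      simp [addf, dl, List.get]
    · omega
  · intro j h
    simp only [List.length_singleton] at h
    rcases j with _ | j
    · show Spair 2 (addf (dl 0 1) (dl 1 1)) (addf (dl 0 1) (dl 1 1)) = _
      rw [Spair_addf_right, Spair_dl_right 2 0 1 _ (by omega), Spair_dl_right 2 1 _ _ (by omega)]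
      simp [addf, dl, List.get]
    · omega
  · intro i h; simp only [List.length_singleton] at h; omega
  · intro j h; simp only [List.length_singleton] at h; omega
  · intro i j h1 h2; simp only [List.length_singleton] at h2; omega
  · intro i j h1 h2; simp only [List.length_singleton] at h2; omega
  · intro i j hi hj
    simp only [List.length_singleton] at hi hj
    rcases i with _ | i
    · rcases j with _ | j
      · show Spair 2 (addf (dl 0 1) (dl 1 (-1))) (addf (dl 0 1) (dl 1 1)) = 0
        rw [Spair_addf_right, Spair_dl_right 2 0 1 _ (by omega), Spair_dl_right 2 1 _ _ (by omega)]
        simp [addf, dl]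
      · omega
    · omega
  · refine ⟨1, by omega, 1, by ring, ?_, ?_, ?_, ?_⟩
    · show addf (dl 0 1) (dl 1 (-1)) 1 = -1
      simp [addf, dl]
    · show addf (dl 0 1) (dl 1 1) 1 = 1
      simp [addf, dl]
    · intro i hi; rcases i with _ | i
      · omega
      · rfl
    · intro j hj; rcases j with _ | j
      · omega
      · rfl

lemma step_lemma (N : ℕ) (q : ℤ) (as bs : List ℤ) (u v : ℕ → ℕ → ℤ)
    (hg : Good N as ((q - 1) :: bs) u v) (hi : ChainInv N u v) :
    ∃ U V : ℕ → ℕ → ℤ, Good (N + 1) (2 :: as) (q :: bs) U V ∧ ChainInv (N + 1) U V := by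
  obtain ⟨hus, hvs, hun, hvn, hua, hva, hud, hvd, hcr⟩ := hg
  obtain ⟨k₀, hk₀, s, hs, hu0, hv0, huk, hvk⟩ := hi
  have hk₀N : k₀ ≠ N := Nat.ne_of_lt hk₀
  have hk₀M : k₀ < N + 1 := by omega
  have hNM : N < N + 1 := by omega
  have huN : ∀ i, u i N = 0 := fun i => hus i N le_rfl
  have hvN : ∀ j, v j N = 0 := fun j => hvs j N le_rfl
  set W : ℕ → ℤ := addf (dl N 1) (dl k₀ s) with hW
  have hWN : W N = 1 := by
    simp only [hW, addf, dl_self, dl_ne k₀ N s (Ne.symm hk₀N)]; ring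
  have hWk : W k₀ = s := by
    simp only [hW, addf, dl_self, dl_ne N k₀ 1 hk₀N]; ring
  have A1 : ∀ x : ℕ → ℤ, Spair (N + 1) x W = x N + x k₀ * s := by
    intro x
    rw [hW, Spair_addf_right, Spair_dl_right _ _ _ _ hNM, Spair_dl_right _ _ _ _ hk₀M, mul_one]
  have A2 : ∀ x : ℕ → ℤ, Spair (N + 1) W x = x N + s * x k₀ := by
    intro x
    rw [Spair_comm, A1, mul_comm]
  set V0 : ℕ → ℤ := subf (v 0) (dl N 1) with hV0
  have hV0N : V0 N = -1 := by
    simp only [hV0, subf, dl_self, hvN 0]; ring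
  have hV0k : V0 k₀ = s := by
    simp only [hV0, subf, dl_ne N k₀ 1 hk₀N, hv0]; ring
  refine ⟨fun i => match i with | 0 => W | i + 1 => u i,
          fun j => match j with | 0 => V0 | j + 1 => v (j + 1),
          ⟨?_, ?_, ?_, ?_, ?_, ?_, ?_, ?_, ?_⟩, ?_⟩
  · -- U support
    intro i k hk
    rcases i with _ | i
    · show W k = 0
      simp only [hW, addf, dl_ne N k 1 (by omega), dl_ne k₀ k s (by omega)]; ring
    · exact hus i k (by omega)
  · -- V support
    intro j k hk
    rcases j with _ | j
    · show V0 k = 0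
      simp only [hV0, subf, dl_ne N k 1 (by omega), hvs 0 k (by omega)]; ring
    · exact hvs (j + 1) k (by omega)
  · -- u norms
    intro i h
    rcases i with _ | i
    · show Spair (N + 1) W W = _
      rw [A1, hWN, hWk, hs]
      rfl
    · show Spair (N + 1) (u i) (u i) = _
      rw [Spair_lift _ _ _ (huN i)]
      simp only [List.length_cons] at h
      exact hun i (by omega)
  · -- v norms
    intro j h
    rcases j with _ | j
    · show Spair (N + 1) V0 V0 = _
      rw [hV0, Spair_subf_right, Spair_subf_left, Spair_subf_left,
        Spair_lift _ _ _ (hvN 0), Spair_dl_left _ _ _ _ hNM,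
        Spair_dl_right _ _ _ _ hNM, Spair_dl_right _ _ _ _ hNM,
        hvn 0 (by simp), hvN 0, dl_self]
      show q - 1 - 1 * 0 - (0 * 1 - 1 * 1) = q
      ring
    · show Spair (N + 1) (v (j + 1)) (v (j + 1)) = _
      rw [Spair_lift _ _ _ (hvN (j + 1))]
      simp only [List.length_cons] at h
      exact hvn (j + 1) (by simp only [List.length_cons]; omega)
  · -- u adjacency
    intro i h
    simp only [List.length_cons] at h
    rcases i with _ | i
    · show Spair (N + 1) W (u 0) = -1
      rw [A2, huN 0, hu0]
      linear_combination -hs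
    · show Spair (N + 1) (u i) (u (i + 1)) = -1
      rw [Spair_lift _ _ _ (huN i)]
      exact hua i (by omega)
  · -- v adjacency
    intro j h
    simp only [List.length_cons] at h
    rcases j with _ | j
    · show Spair (N + 1) V0 (v 1) = -1
      rw [hV0, Spair_subf_left, Spair_lift _ _ _ (hvN 0), Spair_dl_left _ _ _ _ hNM,
        hva 0 (by simp only [List.length_cons]; omega), hvN 1]
      ring
    · show Spair (N + 1) (v (j + 1)) (v (j + 1 + 1)) = -1
      rw [Spair_lift _ _ _ (hvN (j + 1))]
      exact hva (j + 1) (by simp only [List.length_cons]; omega)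
  · -- u distant
    intro i j hij hj
    simp only [List.length_cons] at hj
    rcases i with _ | i
    · rcases j with _ | j
      · omega
      · show Spair (N + 1) W (u j) = 0
        rw [A2, huN j, huk j (by omega)]
        ring
    · rcases j with _ | j
      · omega
      · show Spair (N + 1) (u i) (u j) = 0
        rw [Spair_lift _ _ _ (huN i)]
        exact hud i j (by omega) (by omega)
  · -- v distant
    intro i j hij hj
    simp only [List.length_cons] at hj
    rcases i with _ | i
    · rcases j with _ | j
      · omega
      · show Spair (N + 1) V0 (v (j + 1)) = 0
        rw [hV0, Spair_subf_left, Spair_lift _ _ _ (hvN 0), Spair_dl_left _ _ _ _ hNM,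
          hvd 0 (j + 1) (by omega) (by simp only [List.length_cons]; omega), hvN (j + 1)]
        ring
    · rcases j with _ | j
      · omega
      · show Spair (N + 1) (v (i + 1)) (v (j + 1)) = 0
        rw [Spair_lift _ _ _ (hvN (i + 1))]
        exact hvd (i + 1) (j + 1) (by omega) (by simp only [List.length_cons]; omega)
  · -- cross
    intro i j hi hj
    simp only [List.length_cons] at hi hj
    rcases i with _ | i
    · rcases j with _ | j
      · show Spair (N + 1) W V0 = 0
        rw [A2, hV0N, hV0k, hs]
        ring
      · show Spair (N + 1) W (v (j + 1)) = 0
        rw [A2, hvN (j + 1), hvk (j + 1) (by omega)]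
        ring
    · rcases j with _ | j
      · show Spair (N + 1) (u i) V0 = 0
        rw [hV0, Spair_subf_right, Spair_lift _ _ _ (huN i), Spair_dl_right _ _ _ _ hNM,
          hcr i 0 (by omega) (by simp only [List.length_cons]; omega), huN i]
        ring
      · show Spair (N + 1) (u i) (v (j + 1)) = 0
        rw [Spair_lift _ _ _ (huN i)]
        exact hcr i (j + 1) (by omega) (by simp only [List.length_cons]; omega)
  · -- ChainInv
    refine ⟨N, by omega, -1, by ring, ?_, ?_, ?_, ?_⟩
    · show W N = -(-1); rw [hWN]; ring
    · show V0 N = -1; exact hV0N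
    · intro i hi
      rcases i with _ | i
      · omega
      · exact huN i
    · intro j hj
      rcases j with _ | j
      · omega
      · exact hvN (j + 1)

lemma core : ∀ N (a b : List ℤ), a.length + b.length = N → a ≠ [] → b ≠ [] →
    (∀ x ∈ a, 2 ≤ x) → (∀ x ∈ b, 2 ≤ x) → 1 / ncfZ a + 1 / ncfZ b = 1 →
    ∃ u v : ℕ → ℕ → ℤ, Good N a b u v ∧ ChainInv N u v := by
  intro N
  induction N using Nat.strong_induction_on with
  | _ N ih =>
  intro a b hlen ha hb ha2 hb2 hsum
  obtain ⟨p, as, rfl⟩ := List.exists_cons_of_ne_nil ha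
  obtain ⟨q, bs, rfl⟩ := List.exists_cons_of_ne_nil hb
  have hp2 : 2 ≤ p := ha2 p (by simp)
  have hq2 : 2 ≤ q := hb2 q (by simp)
  have has2 : ∀ x ∈ as, 2 ≤ x := fun x hx => ha2 x (by simp [hx])
  have hbs2 : ∀ x ∈ bs, 2 ≤ x := fun x hx => hb2 x (by simp [hx])
  have hxb := ncfZ_bounds as p hp2 has2
  have hyb := ncfZ_bounds bs q hq2 hbs2
  set x := ncfZ (p :: as) with hxdef
  set y := ncfZ (q :: bs) with hydef
  have hx1 : 1 < x := hxb.1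
  have hy1 : 1 < y := hyb.1
  have hx0 : x ≠ 0 := by linarith
  have hy0 : y ≠ 0 := by linarith
  have hxy : x * y = x + y := by
    field_simp at hsum
    linarith
  have hfact : (x - 1) * (y - 1) = 1 := by ring_nf; linear_combination hxy
  simp only [List.length_cons] at hlen
  by_cases hN2 : N = 2
  · -- base case: both singletons
    have hase : as = [] := List.length_eq_zero_iff.mp (by omega)
    have hbse : bs = [] := List.length_eq_zero_iff.mp (by omega)
    subst hase; subst hbse
    have hxp : x = (p : ℚ) := ncfZ_singleton p
    have hyq : y = (q : ℚ) := ncfZ_singleton q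
    have h1 : ((p : ℚ) - 1) * ((q : ℚ) - 1) = 1 := by rw [← hxp, ← hyq]; exact hfact
    have h2 : (p - 1) * (q - 1) = 1 := by exact_mod_cast h1
    have hp2' : p = 2 := by nlinarith
    have hq2' : q = 2 := by nlinarith
    subst hp2'; subst hq2'; subst hN2
    exact base_case
  · have hN3 : 3 ≤ N := by omega
    by_cases hp : p = 2
    · -- first list starts with 2 : move M1
      subst hp
      have hq3 : 3 ≤ q := by
        by_contra hq
        have hq2' : q = 2 := by omega
        subst hq2'
        have hxle : x ≤ 2 := by exact_mod_cast hxb.2.2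
        have hyle : y ≤ 2 := by exact_mod_cast hyb.2.2
        rcases as with _ | ⟨c, cs⟩
        · have hbne : bs ≠ [] := by
            intro h; subst h; simp at hlen; omega
          obtain ⟨c, cs, rfl⟩ := List.exists_cons_of_ne_nil hbne
          have hylt : y < 2 := by
            have := ncfZ_lt_head 2 c cs (hbs2 c (by simp)) (fun z hz => hbs2 z (by simp [hz]))
            rw [← hydef] at this; exact_mod_cast this
          nlinarith
        · have hxlt : x < 2 := by
            have := ncfZ_lt_head 2 c cs (has2 c (by simp)) (fun z hz => has2 z (by simp [hz]))
            rw [← hxdef] at this; exact_mod_cast this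
          nlinarith
      have hy2 : 2 < y := by
        have : (q : ℚ) - 1 < y := hyb.2.1
        have h3 : (3 : ℚ) ≤ (q : ℚ) := by exact_mod_cast hq3
        linarith
      have hasne : as ≠ [] := by
        intro h
        subst h
        have hx2 : x = 2 := by rw [hxdef, ncfZ_singleton]; norm_num
        nlinarith
      obtain ⟨c, cs, rfl⟩ := List.exists_cons_of_ne_nil hasne
      set x' := ncfZ (c :: cs) with hx'def
      have hx'b := ncfZ_bounds cs c (has2 c (by simp)) (fun z hz => has2 z (by simp [hz]))
      have hx'1 : 1 < x' := hx'b.1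
      have hx'0 : x' ≠ 0 := by linarith
      have hxx' : x = 2 - 1 / x' := by
        rw [hxdef, ncfZ_cons_cons]; norm_num; exact hx'def.symm
      have hy'' : ncfZ ((q - 1) :: bs) = y - 1 := ncfZ_pred_head q bs
      have hy''0 : y - 1 ≠ 0 := by linarith
      have hsum' : 1 / x' + 1 / ncfZ ((q - 1) :: bs) = 1 := by
        rw [hy'']
        have e1 : 1 / x' = 2 - x := by
          rw [hxx']; ring
        have e2 : 1 / (y - 1) = x - 1 := by
          rw [div_eq_iff hy''0]; linarith [hfact]
        rw [e1, e2]; ring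
      obtain ⟨u, v, hg, hinv⟩ := ih (N - 1) (by omega) (c :: cs) ((q - 1) :: bs)
        (by simp only [List.length_cons] at hlen ⊢; omega)
        (by simp) (by simp)
        (fun z hz => has2 z hz)
        (by
          intro z hz
          rcases List.mem_cons.mp hz with h | h
          · omega
          · exact hbs2 z h)
        hsum'
      obtain ⟨U, V, hG, hI⟩ := step_lemma (N - 1) q (c :: cs) bs u v hg hinv
      have hNe : N - 1 + 1 = N := by omega
      rw [hNe] at hG hI
      exact ⟨U, V, hG, hI⟩
    · -- p ≥ 3, so q = 2 : move M2 (use symmetry)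
      have hp3 : 3 ≤ p := by omega
      have hq2' : q = 2 := by
        by_contra hq
        have hq3 : 3 ≤ q := by omega
        have hx2 : 2 < x := by
          have : (p : ℚ) - 1 < x := hxb.2.1
          have h3 : (3 : ℚ) ≤ (p : ℚ) := by exact_mod_cast hp3
          linarith
        have hy2 : 2 < y := by
          have : (q : ℚ) - 1 < y := hyb.2.1
          have h3 : (3 : ℚ) ≤ (q : ℚ) := by exact_mod_cast hq3
          linarith
        nlinarith
      subst hq2'
      have hx2 : 2 < x := by
        have : (p : ℚ) - 1 < x := hxb.2.1
        have h3 : (3 : ℚ) ≤ (p : ℚ) := by exact_mod_cast hp3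
        linarith
      have hbsne : bs ≠ [] := by
        intro h
        subst h
        have hy2 : y = 2 := by rw [hydef, ncfZ_singleton]; norm_num
        nlinarith
      obtain ⟨c, cs, rfl⟩ := List.exists_cons_of_ne_nil hbsne
      set y' := ncfZ (c :: cs) with hy'def
      have hy'b := ncfZ_bounds cs c (hbs2 c (by simp)) (fun z hz => hbs2 z (by simp [hz]))
      have hy'1 : 1 < y' := hy'b.1
      have hy'0 : y' ≠ 0 := by linarith
      have hyy' : y = 2 - 1 / y' := by
        rw [hydef, ncfZ_cons_cons]; norm_num; exact hy'def.symm
      have hx'' : ncfZ ((p - 1) :: as) = x - 1 := ncfZ_pred_head p as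
      have hx''0 : x - 1 ≠ 0 := by linarith
      have hsum' : 1 / y' + 1 / ncfZ ((p - 1) :: as) = 1 := by
        rw [hx'']
        have e1 : 1 / y' = 2 - y := by
          rw [hyy']; ring
        have e2 : 1 / (x - 1) = y - 1 := by
          rw [div_eq_iff hx''0]; linarith [hfact]
        rw [e1, e2]; ring
      obtain ⟨u, v, hg, hinv⟩ := ih (N - 1) (by omega) (c :: cs) ((p - 1) :: as)
        (by simp only [List.length_cons] at hlen ⊢; omega)
        (by simp) (by simp)
        (fun z hz => hbs2 z hz)
        (by
          intro z hz
          rcases List.mem_cons.mp hz with h | h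
          · omega
          · exact has2 z h)
        hsum'
      obtain ⟨U, V, hG, hI⟩ := step_lemma (N - 1) p (c :: cs) as u v hg hinv
      have hNe : N - 1 + 1 = N := by omega
      rw [hNe] at hG hI
      exact ⟨V, U, hG.symm, hI.symm⟩

def negForm {N : ℕ} (x y : Fin N → ℤ) : ℤ := -∑ i, x i * y i

theorem complementary_legs_lattice_embedding (a b : List ℤ) (h : Complementary a b) :
    ∃ (u : Fin a.length → Fin (a.length + b.length) → ℤ)
      (v : Fin b.length → Fin (a.length + b.length) → ℤ),
      (∀ i, negForm (u i) (u i) = -a.get i) ∧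
      (∀ j, negForm (v j) (v j) = -b.get j) ∧
      (∀ i j : Fin a.length, (j : ℕ) = (i : ℕ) + 1 → negForm (u i) (u j) = 1) ∧
      (∀ i j : Fin b.length, (j : ℕ) = (i : ℕ) + 1 → negForm (v i) (v j) = 1) ∧
      (∀ i j : Fin a.length, (i : ℕ) + 2 ≤ (j : ℕ) ∨ (j : ℕ) + 2 ≤ (i : ℕ) →
        negForm (u i) (u j) = 0) ∧
      (∀ i j : Fin b.length, (i : ℕ) + 2 ≤ (j : ℕ) ∨ (j : ℕ) + 2 ≤ (i : ℕ) →
        negForm (v i) (v j) = 0) ∧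
      (∀ i j, negForm (u i) (v j) = 0) := by
  obtain ⟨ha, hb, ha2, hb2, hsum⟩ := h
  obtain ⟨U, V, hG, -⟩ := core (a.length + b.length) a b rfl ha hb ha2 hb2 hsum
  obtain ⟨hus, hvs, hun, hvn, hua, hva, hud, hvd, hcr⟩ := hG
  have key : ∀ (x y : ℕ → ℤ),
      negForm (fun k : Fin (a.length + b.length) => x k) (fun k : Fin (a.length + b.length) => y k)
        = -(Spair (a.length + b.length) x y) := by
    intro x y
    unfold negForm Spair
    rw [Fin.sum_univ_eq_sum_range (fun k => x k * y k)]
  refine ⟨fun i k => U i k, fun j k => V j k, ?_, ?_, ?_, ?_, ?_, ?_, ?_⟩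
  · intro i
    rw [key, hun i i.isLt]
  · intro j
    rw [key, hvn j j.isLt]
  · intro i j hj
    have h2 : (i : ℕ) + 1 < a.length := hj ▸ j.isLt
    simp only [hj]
    rw [key, hua i h2]; norm_num
  · intro i j hj
    have h2 : (i : ℕ) + 1 < b.length := hj ▸ j.isLt
    simp only [hj]
    rw [key, hva i h2]; norm_num
  · intro i j hij
    rw [key]
    rcases hij with h1 | h1
    · rw [hud i j h1 j.isLt]; norm_num
    · rw [Spair_comm, hud j i h1 i.isLt]; norm_num
  · intro i j hij
    rw [key]
    rcases hij with h1 | h1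
    · rw [hvd i j h1 j.isLt]; norm_num
    · rw [Spair_comm, hvd j i h1 i.isLt]; norm_num
  · intro i j
    rw [key, hcr i j i.isLt j.isLt]; norm_num
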